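/- In the real Hilbert space ℓ², let C = {(x_n) ∈ ℓ² : Σ_{n=1}^∞ x_n/n = 1 and x_n ≥ 0 for all n} and D = {(y_n) ∈ ℓ² : Σ_{n=1}^∞ y_n/(n+1) = 1 and y_n ≥ 0 for all n}. Then C and D are disjoint nonempty unbounded closed convex subsets of ℓ², rec(C) = rec(D) = {0}, and inf{‖ξ − ζ‖₂ : ξ ∈ C, ζ ∈ D} = 0; in particular, C and D are not strongly separated. -/

import Mathlib

open Filter Topology

/-- The recession cone of a set `C`: vectors `v` with `c + v ∈ C` for all `c ∈ C`. -/
def recessionCone {X : Type*} [NormedAddCommGroup X] [NormedSpace ℝ X] (C : Set X) :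
    Set X :=
  {v | ∀ c ∈ C, c + v ∈ C}

/-- `C` and `D` are strongly separated. -/
def StronglySeparated {X : Type*} [NormedAddCommGroup X] [NormedSpace ℝ X]
    (C D : Set X) : Prop :=
  ∃ f : X →L[ℝ] ℝ, f ≠ 0 ∧ ∃ a b : ℝ, a < b ∧ (∀ c ∈ C, f c ≤ a) ∧ ∀ d ∈ D, b ≤ f d

open scoped ENNReal NNReal

noncomputable section S18aux
namespace S18

abbrev H2 : Type := lp (fun _ : ℕ => ℝ) 2

lemma memℓp_inv (c : ℝ) (hc : 1 ≤ c) : Memℓp (fun k : ℕ => 1 / ((k : ℝ) + c)) 2 := by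
  apply memℓp_gen
  have h2 : ((2 : ℝ≥0∞)).toReal = (2 : ℝ) := by norm_num
  have hs : Summable fun k : ℕ => (1 / ((k : ℝ) + 1)) ^ 2 := by
    have := (Real.summable_one_div_nat_pow (p := 2)).mpr one_lt_two
    have := (summable_nat_add_iff 1).mpr this
    refine this.congr fun k => ?_
    push_cast
    rw [div_pow, one_pow]
  refine Summable.of_nonneg_of_le (fun k => ?_) (fun k => ?_) hs
  · positivity
  · rw [h2]
    have hk : (0:ℝ) < (k : ℝ) + c := by positivity
    have hk1 : (0:ℝ) < (k : ℝ) + 1 := by positivity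
    rw [Real.rpow_two]
    rw [Real.norm_eq_abs, abs_of_nonneg (by positivity)]
    have h1 : (1:ℝ)/((k:ℝ)+c) ≤ 1/((k:ℝ)+1) := by
      apply one_div_le_one_div_of_le hk1; linarith
    exact pow_le_pow_left₀ (by positivity) h1 2

def w (c : ℝ) (hc : 1 ≤ c) : H2 := ⟨fun k : ℕ => 1 / ((k : ℝ) + c), memℓp_inv c hc⟩

lemma w_apply (c : ℝ) (hc : 1 ≤ c) (k : ℕ) : (w c hc) k = 1 / ((k : ℝ) + c) := rfl

lemma w_pos (c : ℝ) (hc : 1 ≤ c) (k : ℕ) : 0 < (w c hc) k := by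
  rw [w_apply]; positivity

lemma tsum_eq_inner (c : ℝ) (hc : 1 ≤ c) (ξ : H2) :
    (∑' k : ℕ, ξ k / ((k : ℝ) + c)) = (inner ℝ (w c hc) ξ : ℝ) := by
  rw [lp.inner_eq_tsum]
  refine tsum_congr fun k => ?_
  simp [RCLike.inner_apply, w_apply, div_eq_mul_inv, mul_comm]

lemma inner_w_single (c : ℝ) (hc : 1 ≤ c) (n : ℕ) (x : ℝ) :
    (inner ℝ (w c hc) (lp.single 2 n x) : ℝ) = x / ((n : ℝ) + c) := by
  rw [lp.inner_single_right]
  simp [RCLike.inner_apply, w_apply, div_eq_mul_inv, mul_comm]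

lemma single_coord_nonneg (n : ℕ) (x : ℝ) (hx : 0 ≤ x) (k : ℕ) :
    0 ≤ (lp.single 2 n x : H2) k := by
  rcases eq_or_ne k n with rfl | h
  · rw [lp.single_apply_self]; exact hx
  · rw [lp.single_apply_ne _ _ _ h]

lemma cont_coord (k : ℕ) : Continuous fun ξ : H2 => ξ k := by
  refine (LipschitzWith.of_dist_le_mul (K := 1) fun ξ η => ?_).continuous
  simp only [NNReal.coe_one, one_mul, dist_eq_norm]
  have := lp.norm_apply_le_norm (E := fun _ : ℕ => ℝ) (by norm_num : (2:ℝ≥0∞) ≠ 0) (ξ - η) k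
  simpa [lp.coeFn_sub] using this

lemma coords_eq_zero (wv ξ : H2) (hw : ∀ k, 0 < wv k) (hξ : ∀ k, 0 ≤ ξ k)
    (h : (inner ℝ wv ξ : ℝ) = 0) : ξ = 0 := by
  have hsum : Summable fun k : ℕ => wv k * ξ k := by
    have := lp.summable_inner (𝕜 := ℝ) wv ξ
    simpa [RCLike.inner_apply, mul_comm] using this
  have htsum : (∑' k : ℕ, wv k * ξ k) = 0 := by
    rw [← h, lp.inner_eq_tsum]
    exact tsum_congr fun k => by simp [RCLike.inner_apply, mul_comm]
  have hcoord : ∀ k, ξ k = 0 := by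
    intro k
    have hle := Summable.le_tsum hsum k fun j _ => mul_nonneg (hw j).le (hξ j)
    rw [htsum] at hle
    have h0 : wv k * ξ k = 0 := le_antisymm hle (mul_nonneg (hw k).le (hξ k))
    rcases mul_eq_zero.mp h0 with h' | h'
    · exact absurd h' (hw k).ne'
    · exact h'
  exact lp.ext (funext fun k => by simpa [lp.coeFn_zero] using hcoord k)

lemma closed_level (c : ℝ) (hc : 1 ≤ c) :
    IsClosed {ξ : H2 | (inner ℝ (w c hc) ξ : ℝ) = 1 ∧ ∀ k, 0 ≤ ξ k} := by
  have heq : {ξ : H2 | (inner ℝ (w c hc) ξ : ℝ) = 1 ∧ ∀ k, 0 ≤ ξ k} =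
      (innerSL ℝ (w c hc)) ⁻¹' {1} ∩ ⋂ k, (fun ξ : H2 => ξ k) ⁻¹' Set.Ici 0 := by
    ext ξ
    simp [Set.mem_iInter, innerSL_apply_apply]
  rw [heq]
  exact (isClosed_singleton.preimage (innerSL ℝ (w c hc)).continuous).inter
    (isClosed_iInter fun k => isClosed_Ici.preimage (cont_coord k))

end S18
end S18aux

open S18

/-- In `ℓ²`, the sets
`C = {(x_n) : Σ x_n/n = 1, x_n ≥ 0}` and `D = {(y_n) : Σ y_n/(n+1) = 1, y_n ≥ 0}`
(indices starting at `1` in the paper; here sequences are indexed by `ℕ` starting at `0`, so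
the weights are `1/(k+1)` and `1/(k+2)` respectively) are disjoint nonempty unbounded closed
convex sets with `rec(C) = rec(D) = {0}` and `inf{‖ξ - ζ‖ : ξ ∈ C, ζ ∈ D} = 0`; in
particular they are not strongly separated. -/
theorem statement18
    (C D : Set (lp (fun _ : ℕ => ℝ) 2))
    (hC : C = {ξ : lp (fun _ : ℕ => ℝ) 2 |
      (∑' k : ℕ, ξ k / ((k : ℝ) + 1)) = 1 ∧ ∀ k, 0 ≤ ξ k})
    (hD : D = {ζ : lp (fun _ : ℕ => ℝ) 2 |
      (∑' k : ℕ, ζ k / ((k : ℝ) + 2)) = 1 ∧ ∀ k, 0 ≤ ζ k}) :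
    Disjoint C D ∧ C.Nonempty ∧ D.Nonempty ∧
      ¬ Bornology.IsBounded C ∧ ¬ Bornology.IsBounded D ∧
      IsClosed C ∧ IsClosed D ∧ Convex ℝ C ∧ Convex ℝ D ∧
      recessionCone C = {0} ∧ recessionCone D = {0} ∧
      (∀ ε > (0 : ℝ), ∃ ξ ∈ C, ∃ ζ ∈ D, ‖ξ - ζ‖ < ε) ∧
      ¬ StronglySeparated C D := by
  set a : H2 := w 1 le_rfl with ha
  set b : H2 := w 2 one_le_two with hb
  have hCa : C = {ξ : H2 | (inner ℝ a ξ : ℝ) = 1 ∧ ∀ k, 0 ≤ ξ k} := by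
    rw [hC]; ext ξ
    simp only [Set.mem_setOf_eq, tsum_eq_inner 1 le_rfl ξ, ha]
  have hDb : D = {ξ : H2 | (inner ℝ b ξ : ℝ) = 1 ∧ ∀ k, 0 ≤ ξ k} := by
    rw [hD]; ext ξ
    simp only [Set.mem_setOf_eq, tsum_eq_inner 2 one_le_two ξ, hb]
  -- canonical elements
  have hξC : ∀ n : ℕ, (lp.single 2 n ((n:ℝ)+1) : H2) ∈ C := by
    intro n
    rw [hCa]
    refine ⟨?_, single_coord_nonneg n _ (by positivity)⟩
    rw [ha, inner_w_single]
    field_simp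
  have hζD : ∀ n : ℕ, (lp.single 2 n ((n:ℝ)+2) : H2) ∈ D := by
    intro n
    rw [hDb]
    refine ⟨?_, single_coord_nonneg n _ (by positivity)⟩
    rw [hb, inner_w_single]
    field_simp
  have htp : (0:ℝ) < (2:ℝ≥0∞).toReal := by norm_num
  -- unboundedness
  have hunbdd : ∀ (S : Set H2) (c : ℝ),
      (∀ n : ℕ, (lp.single 2 n ((n:ℝ)+c) : H2) ∈ S) → 0 ≤ c → ¬ Bornology.IsBounded S := by
    intro S c hmem hc hbdd
    obtain ⟨M, hM⟩ := isBounded_iff_forall_norm_le.mp hbdd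
    obtain ⟨n, hn⟩ := exists_nat_gt M
    have h1 := hM _ (hmem n)
    have h2 : ‖(lp.single 2 n ((n:ℝ)+c) : H2)‖ = (n:ℝ)+c := by
      have := lp.norm_single (E := fun _ : ℕ => ℝ) (by norm_num : (0:ℝ≥0∞) < 2) n ((n:ℝ)+c)
      rw [this, Real.norm_eq_abs, abs_of_nonneg (by positivity)]
    rw [h2] at h1
    linarith
  -- convexity
  have hconv : ∀ (S : Set H2) (wv : H2),
      S = {ξ : H2 | (inner ℝ wv ξ : ℝ) = 1 ∧ ∀ k, 0 ≤ ξ k} → Convex ℝ S := by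
    intro S wv hS
    rw [hS]
    rintro ξ ⟨hξ1, hξ2⟩ η ⟨hη1, hη2⟩ s t hs ht hst
    constructor
    · rw [inner_add_right, real_inner_smul_right, real_inner_smul_right, hξ1, hη1]
      simpa using hst
    · intro k
      have : (s • ξ + t • η) k = s * ξ k + t * η k := by
        simp [lp.coeFn_add, lp.coeFn_smul]; rfl
      rw [this]
      exact add_nonneg (mul_nonneg hs (hξ2 k)) (mul_nonneg ht (hη2 k))
  -- recession cones
  have hrec : ∀ (S : Set H2) (wv : H2) (c : ℝ),
      S = {ξ : H2 | (inner ℝ wv ξ : ℝ) = 1 ∧ ∀ k, 0 ≤ ξ k} →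
      (∀ k, 0 < wv k) →
      (∀ n : ℕ, (lp.single 2 n ((n:ℝ)+c) : H2) ∈ S) →
      recessionCone S = {0} := by
    intro S wv c hS hw hmem
    ext v
    simp only [recessionCone, Set.mem_setOf_eq, Set.mem_singleton_iff]
    constructor
    · intro hv
      have hv0 : ∀ k, 0 ≤ v k := by
        intro k
        have h1 := hv _ (hmem (k+1))
        rw [hS] at h1
        have h2 := h1.2 k
        have h3 : ((lp.single 2 (k+1) ((((k+1):ℕ):ℝ)+c) : H2) + v) k = v k := by
          rw [lp.coeFn_add, Pi.add_apply, lp.single_apply_ne _ _ _ (by omega), zero_add]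
        rwa [h3] at h2
      have hinner : (inner ℝ wv v : ℝ) = 0 := by
        have h1 := hv _ (hmem 0)
        rw [hS] at h1
        have h2 := h1.1
        have h0 : (lp.single 2 0 (((0:ℕ):ℝ)+c) : H2) ∈ S := hmem 0
        rw [hS] at h0
        rw [inner_add_right, h0.1] at h2
        linarith
      exact coords_eq_zero wv v hw hv0 hinner
    · rintro rfl
      intro ξ hξ
      simpa using hξ
  -- disjointness
  have hdisj : Disjoint C D := by
    rw [Set.disjoint_left]
    intro ξ hξC' hξD'
    rw [hCa] at hξC'
    rw [hDb] at hξD'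
    have hsub : (inner ℝ (a - b) ξ : ℝ) = 0 := by
      rw [inner_sub_left, hξC'.1, hξD'.1]; ring
    have hwpos : ∀ k, 0 < (a - b) k := by
      intro k
      rw [lp.coeFn_sub, Pi.sub_apply, ha, hb, w_apply, w_apply]
      rw [sub_pos]
      apply one_div_lt_one_div_of_lt (by positivity)
      linarith
    have hz : ξ = 0 := coords_eq_zero _ ξ hwpos hξC'.2 hsub
    have h1 : (inner ℝ a ξ : ℝ) = 1 := hξC'.1
    rw [hz, inner_zero_right] at h1
    exact one_ne_zero h1.symm
  -- approximation
  have happrox : ∀ ε > (0 : ℝ), ∃ ξ ∈ C, ∃ ζ ∈ D, ‖ξ - ζ‖ < ε := by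
    intro ε hε
    obtain ⟨n, hn⟩ := exists_nat_gt (2 / ε)
    set t : ℝ := 2 / ((n:ℝ) + 2) with hter
    have htpos : 0 < t := by positivity
    refine ⟨lp.single 2 n ((n:ℝ)+1), hξC n,
      lp.single 2 n ((n:ℝ)+1) + lp.single 2 0 t, ?_, ?_⟩
    · rw [hDb]
      constructor
      · rw [inner_add_right, hb, inner_w_single, inner_w_single]
        have hn2 : ((n:ℝ)+2) ≠ 0 := by positivity
        rw [hter]
        push_cast
        field_simp
        ring
      · intro k
        rw [lp.coeFn_add, Pi.add_apply]
        exact add_nonneg (single_coord_nonneg n _ (by positivity) k)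
          (single_coord_nonneg 0 _ htpos.le k)
    · have heq : (lp.single 2 n ((n:ℝ)+1) : H2) -
          (lp.single 2 n ((n:ℝ)+1) + lp.single 2 0 t) = -(lp.single 2 0 t) := by
        abel
      rw [heq, norm_neg]
      have hns : ‖(lp.single 2 0 t : H2)‖ = t := by
        have := lp.norm_single (E := fun _ : ℕ => ℝ) (by norm_num : (0:ℝ≥0∞) < 2) 0 t
        rw [this, Real.norm_eq_abs, abs_of_nonneg htpos.le]
      rw [hns, hter]
      rw [div_lt_iff₀ (by positivity)]
      have h2 : 2 / ε < (n:ℝ) + 2 := by linarith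
      have := (div_lt_iff₀ hε).mp h2
      linarith
  refine ⟨hdisj, ⟨_, hξC 0⟩, ⟨_, hζD 0⟩,
    hunbdd C 1 hξC zero_le_one, hunbdd D 2 hζD zero_le_two,
    by rw [hCa]; exact closed_level 1 le_rfl,
    by rw [hDb]; exact closed_level 2 one_le_two,
    hconv C a hCa, hconv D b hDb,
    hrec C a 1 hCa (w_pos 1 le_rfl) hξC,
    hrec D b 2 hDb (w_pos 2 one_le_two) hζD,
    happrox, ?_⟩
  rintro ⟨f, hf0, A, B, hAB, hCA, hDB⟩
  have hε : (0:ℝ) < (B - A) / (‖f‖ + 1) := by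
    apply div_pos (by linarith) (by positivity)
  obtain ⟨ξ, hξ, ζ, hζ, hclose⟩ := happrox _ hε
  have h1 : B - A ≤ f ζ - f ξ := by
    have := hCA ξ hξ
    have := hDB ζ hζ
    linarith
  have h2 : f ζ - f ξ ≤ ‖f‖ * ‖ζ - ξ‖ := by
    have := f.le_opNorm (ζ - ξ)
    have habs : f ζ - f ξ ≤ |f (ζ - ξ)| := by
      rw [map_sub]; exact le_abs_self _
    calc f ζ - f ξ ≤ |f (ζ - ξ)| := habs
      _ = ‖f (ζ - ξ)‖ := (Real.norm_eq_abs _).symm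
      _ ≤ ‖f‖ * ‖ζ - ξ‖ := f.le_opNorm _
  have h3 : ‖ζ - ξ‖ = ‖ξ - ζ‖ := norm_sub_rev _ _
  rw [h3] at h2
  have h4 : ‖f‖ * ‖ξ - ζ‖ ≤ ‖f‖ * ((B - A) / (‖f‖ + 1)) :=
    mul_le_mul_of_nonneg_left hclose.le (norm_nonneg f)
  have h5 : ‖f‖ * ((B - A) / (‖f‖ + 1)) < B - A := by
    have : ‖f‖ / (‖f‖ + 1) < 1 := by
      rw [div_lt_one (by positivity)]; linarith
    calc ‖f‖ * ((B - A) / (‖f‖ + 1)) = (‖f‖ / (‖f‖ + 1)) * (B - A) := by ring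
      _ < 1 * (B - A) := by
          apply mul_lt_mul_of_pos_right this (by linarith)
      _ = B - A := one_mul _
  linarith
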